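/- Let s ∈ (0,1), let E ⊂ ℝⁿ be a bounded measurable set, and let E₁ denote the set of points at distance at most 1 from E. Let A ∈ L²(ℝⁿ; ℂⁿ) vanish almost everywhere outside E and have finite Besov seminorm [A]_{B^{2,∞}_s}. Let Φ : ℝⁿ → ℂ satisfy |Φ(x)| ≤ K for all x and |Φ(x) − Φ(y)| ≤ H |x − y|^s for all x, y. Then for every y ∈ ℝⁿ with |y| ≤ 1, ∫_{ℝⁿ} |A(x+y) e^{Φ(x+y)} − A(x) e^{Φ(x)}| dx ≤ e^{K} ( m(E₁)^{1/2} [A]_{B^{2,∞}_s} + H · m(E)^{1/2} ‖A‖_{L²(ℝⁿ)} ) |y|^s, where m denotes Lebesgue measure. -/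

import Mathlib

open MeasureTheory Filter Complex
open scoped ENNReal

noncomputable section

/-- The Besov `B^{2,∞}_s` seminorm: `sup_{y ≠ 0} ‖f(·+y) - f‖_{L²} / |y|^s`. -/
def besovSemi (n : ℕ) (s : ℝ) {F : Type*} [NormedAddCommGroup F]
    (f : EuclideanSpace ℝ (Fin n) → F) : ℝ≥0∞ :=
  ⨆ (y : EuclideanSpace ℝ (Fin n)) (_ : y ≠ 0),
    eLpNorm (fun x => f (x + y) - f x) 2 volume / ENNReal.ofReal (‖y‖ ^ s)

/-- Mean value bound for the complex exponential on the half-space `Re ≤ K`. -/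
lemma exp_sub_exp_norm_le (K : ℝ) (a b : ℂ) (ha : ‖a‖ ≤ K) (hb : ‖b‖ ≤ K) :
    ‖Complex.exp a - Complex.exp b‖ ≤ Real.exp K * ‖a - b‖ := by
  have hconv : Convex ℝ {z : ℂ | z.re ≤ K} := convex_halfSpace_re_le K
  have hmem : ∀ z : ℂ, ‖z‖ ≤ K → z ∈ {z : ℂ | z.re ≤ K} := fun z hz =>
    le_trans (Complex.re_le_norm z) hz
  exact hconv.norm_image_sub_le_of_norm_hasDerivWithin_le
    (f := Complex.exp) (f' := Complex.exp)
    (fun z _ => (Complex.hasDerivAt_exp z).hasDerivWithinAt)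
    (fun z hz => by
      rw [Complex.norm_exp]
      exact Real.exp_le_exp.mpr hz)
    (hmem b hb) (hmem a ha)

/-- Cauchy–Schwarz: `‖f‖₁ ≤ (vol S)^{1/2} ‖f‖₂` when `f` vanishes a.e. off `S`. -/
lemma elpnorm_one_le_of_support {n : ℕ}
    {f : EuclideanSpace ℝ (Fin n) → EuclideanSpace ℂ (Fin n)}
    {S : Set (EuclideanSpace ℝ (Fin n))} (hS : MeasurableSet S)
    (hf : AEStronglyMeasurable f volume) (h0 : ∀ᵐ x ∂volume, x ∉ S → f x = 0) :
    eLpNorm f 1 volume ≤ (volume S) ^ (1/2 : ℝ) * eLpNorm f 2 volume := by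
  have hin : f =ᵐ[volume] S.indicator f := by
    filter_upwards [h0] with x hx
    by_cases h : x ∈ S
    · simp [Set.indicator_of_mem h]
    · simp [Set.indicator_of_notMem h, hx h]
  calc eLpNorm f 1 volume = eLpNorm (S.indicator f) 1 volume := eLpNorm_congr_ae hin
    _ = eLpNorm f 1 (volume.restrict S) := eLpNorm_indicator_eq_eLpNorm_restrict hS
    _ ≤ eLpNorm f 2 (volume.restrict S) *
        (volume.restrict S) Set.univ ^ (1/(1:ℝ≥0∞).toReal - 1/(2:ℝ≥0∞).toReal) :=
        eLpNorm_le_eLpNorm_mul_rpow_measure_univ (by norm_num) (hf.restrict)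
    _ ≤ (volume S) ^ (1/2 : ℝ) * eLpNorm f 2 volume := by
        rw [Measure.restrict_apply_univ]
        have he : 1/(1:ℝ≥0∞).toReal - 1/(2:ℝ≥0∞).toReal = (1/2 : ℝ) := by norm_num
        rw [he, mul_comm]
        exact mul_le_mul' le_rfl (eLpNorm_mono_measure f Measure.restrict_le_self)

/-- The defining bound of the Besov seminorm. -/
lemma elpnorm_shift_sub_le_besov (n : ℕ) (s : ℝ)
    (A : EuclideanSpace ℝ (Fin n) → EuclideanSpace ℂ (Fin n))
    (y : EuclideanSpace ℝ (Fin n)) (hy : y ≠ 0) :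
    eLpNorm (fun x => A (x + y) - A x) 2 volume ≤ besovSemi n s A * ENNReal.ofReal (‖y‖ ^ s) := by
  have hpos : 0 < ‖y‖ ^ s := Real.rpow_pos_of_pos (norm_pos_iff.mpr hy) s
  have h0 : ENNReal.ofReal (‖y‖ ^ s) ≠ 0 := by simp [ENNReal.ofReal_eq_zero, not_le, hpos]
  have ht : ENNReal.ofReal (‖y‖ ^ s) ≠ ⊤ := ENNReal.ofReal_ne_top
  have hle : eLpNorm (fun x => A (x + y) - A x) 2 volume / ENNReal.ofReal (‖y‖ ^ s)
      ≤ besovSemi n s A :=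
    le_iSup₂ (f := fun (y : EuclideanSpace ℝ (Fin n)) (_ : y ≠ 0) =>
      eLpNorm (fun x => A (x + y) - A x) 2 volume / ENNReal.ofReal (‖y‖ ^ s)) y hy
  exact (ENNReal.div_le_iff h0 ht).mp hle

theorem stmt11 (n : ℕ) (s : ℝ) (hs0 : 0 < s) (hs1 : s < 1)
    (E : Set (EuclideanSpace ℝ (Fin n)))
    (hEb : Bornology.IsBounded E) (hEm : MeasurableSet E)
    (A : EuclideanSpace ℝ (Fin n) → EuclideanSpace ℂ (Fin n))
    (hA2 : MemLp A 2 volume)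
    (hA0 : ∀ᵐ x ∂(volume : Measure (EuclideanSpace ℝ (Fin n))), x ∉ E → A x = 0)
    (hAB : besovSemi n s A < ⊤)
    (Φ : EuclideanSpace ℝ (Fin n) → ℂ) (K H : ℝ)
    (hΦb : ∀ x, ‖Φ x‖ ≤ K) (hΦh : ∀ x y, ‖Φ x - Φ y‖ ≤ H * ‖x - y‖ ^ s)
    (y : EuclideanSpace ℝ (Fin n)) (hy : ‖y‖ ≤ 1) :
    eLpNorm (fun x => Complex.exp (Φ (x + y)) • A (x + y) - Complex.exp (Φ x) • A x) 1 volume ≤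
      ENNReal.ofReal (Real.exp K) *
        ((volume (Metric.cthickening 1 E)) ^ (1 / 2 : ℝ) * besovSemi n s A +
          ENNReal.ofReal H * (volume E) ^ (1 / 2 : ℝ) * eLpNorm A 2 volume) *
        ENNReal.ofReal (‖y‖ ^ s) := by
  by_cases hy0 : y = 0
  · subst hy0
    simp only [add_zero, sub_self]
    rw [eLpNorm_zero']
    exact zero_le
  -- Continuity of Φ and exp ∘ Φ
  have hΦc : Continuous Φ := by
    have h : HolderWith H.toNNReal ⟨s, hs0.le⟩ Φ := by
      intro x z
      rw [edist_dist, edist_dist, dist_eq_norm, dist_eq_norm]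
      calc ENNReal.ofReal ‖Φ x - Φ z‖ ≤ ENNReal.ofReal (H * ‖x - z‖ ^ s) :=
            ENNReal.ofReal_le_ofReal (hΦh x z)
        _ ≤ ENNReal.ofReal ((H.toNNReal : ℝ) * ‖x - z‖ ^ s) := by
            refine ENNReal.ofReal_le_ofReal ?_
            have := Real.rpow_nonneg (norm_nonneg (x - z)) s
            nlinarith [Real.le_coe_toNNReal H]
        _ = (H.toNNReal : ℝ≥0∞) * ENNReal.ofReal (‖x - z‖ ^ s) := by
            rw [ENNReal.ofReal_mul (by positivity), ENNReal.ofReal_coe_nnreal]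
        _ = (H.toNNReal : ℝ≥0∞) * ENNReal.ofReal ‖x - z‖ ^ (s : ℝ) := by
            rw [ENNReal.ofReal_rpow_of_nonneg (norm_nonneg _) hs0.le]
    exact h.continuous (by exact_mod_cast hs0)
  have hec : Continuous (fun x => Complex.exp (Φ x)) := Complex.continuous_exp.comp hΦc
  have hshift : Continuous (fun x : EuclideanSpace ℝ (Fin n) => x + y) :=
    continuous_id.add continuous_const
  have hmp : MeasurePreserving (fun x : EuclideanSpace ℝ (Fin n) => x + y) volume volume :=
    measurePreserving_add_right volume y
  have hAsm : AEStronglyMeasurable A volume := hA2.aestronglyMeasurable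
  have hAy : AEStronglyMeasurable (fun x => A (x + y)) volume :=
    hAsm.comp_measurePreserving hmp
  set g : EuclideanSpace ℝ (Fin n) → EuclideanSpace ℂ (Fin n) :=
    fun x => A (x + y) - A x with hg_def
  have hg : AEStronglyMeasurable g volume := hAy.sub hAsm
  set f1 : EuclideanSpace ℝ (Fin n) → EuclideanSpace ℂ (Fin n) :=
    fun x => Complex.exp (Φ (x + y)) • g x with hf1_def
  set f2 : EuclideanSpace ℝ (Fin n) → EuclideanSpace ℂ (Fin n) :=
    fun x => (Complex.exp (Φ (x + y)) - Complex.exp (Φ x)) • A x with hf2_def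
  have hf1m : AEStronglyMeasurable f1 volume :=
    ((hec.comp hshift).aestronglyMeasurable).smul hg
  have hf2m : AEStronglyMeasurable f2 volume :=
    (((hec.comp hshift).sub hec).aestronglyMeasurable).smul hAsm
  have hA0y : ∀ᵐ x ∂(volume : Measure (EuclideanSpace ℝ (Fin n))),
      x + y ∉ E → A (x + y) = 0 := hmp.quasiMeasurePreserving.ae hA0
  -- support of g
  set E₁ := Metric.cthickening 1 E with hE₁def
  have hE₁m : MeasurableSet E₁ := Metric.isClosed_cthickening.measurableSet
  have hgsupp : ∀ᵐ x ∂(volume : Measure (EuclideanSpace ℝ (Fin n))), x ∉ E₁ → g x = 0 := by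
    filter_upwards [hA0, hA0y] with x h1 h2 hx
    have hxE : x ∉ E := fun h => hx (Metric.self_subset_cthickening E h)
    have hxyE : x + y ∉ E := by
      intro h
      refine hx (Metric.mem_cthickening_of_dist_le x (x + y) 1 E h ?_)
      have hd : dist x (x + y) = ‖y‖ := by
        rw [dist_eq_norm]
        simp
      rw [hd]; exact hy
    simp [hg_def, h1 hxE, h2 hxyE]
  -- positivity facts
  have hpos : 0 < ‖y‖ ^ s := Real.rpow_pos_of_pos (norm_pos_iff.mpr hy0) s
  have hHy : 0 ≤ H * ‖y‖ ^ s := by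
    have := hΦh y 0
    simp only [sub_zero] at this
    exact le_trans (norm_nonneg _) this
  have hH : 0 ≤ H := by nlinarith
  have heK : (0:ℝ) ≤ Real.exp K := (Real.exp_pos K).le
  -- pointwise decomposition
  have hsplit : (fun x => Complex.exp (Φ (x + y)) • A (x + y) - Complex.exp (Φ x) • A x)
      = fun x => f1 x + f2 x := by
    funext x
    simp only [hf1_def, hf2_def, hg_def, smul_sub, sub_smul]
    abel
  -- bound on f1
  have hb1 : eLpNorm f1 1 volume ≤ ENNReal.ofReal (Real.exp K) * eLpNorm g 1 volume := by
    have hmono : ∀ᵐ x ∂(volume : Measure (EuclideanSpace ℝ (Fin n))),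
        ‖f1 x‖ ≤ ‖(Real.exp K) • g x‖ := by
      refine Eventually.of_forall fun x => ?_
      rw [norm_smul, norm_smul, Complex.norm_exp]
      have h1 : Real.exp (Φ (x + y)).re ≤ Real.exp K :=
        Real.exp_le_exp.mpr (le_trans (Complex.re_le_norm _) (hΦb (x + y)))
      have h2 : ‖Real.exp K‖ = Real.exp K := Real.norm_of_nonneg heK
      rw [h2]
      exact mul_le_mul_of_nonneg_right h1 (norm_nonneg _)
    calc eLpNorm f1 1 volume ≤ eLpNorm ((Real.exp K) • g) 1 volume := eLpNorm_mono_ae hmono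
      _ = ‖Real.exp K‖₊ • eLpNorm g 1 volume := eLpNorm_const_smul _ _ _ _
      _ = ENNReal.ofReal (Real.exp K) * eLpNorm g 1 volume := by
          rw [ENNReal.smul_def, smul_eq_mul, ← Real.enorm_eq_ofReal heK, enorm_eq_nnnorm]
  -- bound on g
  have hb2 : eLpNorm g 1 volume ≤ (volume E₁) ^ (1/2 : ℝ) * eLpNorm g 2 volume :=
    elpnorm_one_le_of_support hE₁m hg hgsupp
  have hb3 : eLpNorm g 2 volume ≤ besovSemi n s A * ENNReal.ofReal (‖y‖ ^ s) :=
    elpnorm_shift_sub_le_besov n s A y hy0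
  -- bound on f2
  have hb4 : eLpNorm f2 1 volume ≤
      ENNReal.ofReal (Real.exp K * (H * ‖y‖ ^ s)) * eLpNorm A 1 volume := by
    have hmono : ∀ᵐ x ∂(volume : Measure (EuclideanSpace ℝ (Fin n))),
        ‖f2 x‖ ≤ ‖(Real.exp K * (H * ‖y‖ ^ s)) • A x‖ := by
      refine Eventually.of_forall fun x => ?_
      rw [norm_smul, norm_smul]
      have hc : ‖Complex.exp (Φ (x + y)) - Complex.exp (Φ x)‖ ≤ Real.exp K * (H * ‖y‖ ^ s) := by
        refine le_trans (exp_sub_exp_norm_le K _ _ (hΦb _) (hΦb _)) ?_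
        refine mul_le_mul_of_nonneg_left ?_ heK
        have := hΦh (x + y) x
        rwa [add_sub_cancel_left] at this
      have h2 : ‖Real.exp K * (H * ‖y‖ ^ s)‖ = Real.exp K * (H * ‖y‖ ^ s) :=
        Real.norm_of_nonneg (by positivity)
      rw [h2]
      exact mul_le_mul_of_nonneg_right hc (norm_nonneg _)
    calc eLpNorm f2 1 volume ≤ eLpNorm ((Real.exp K * (H * ‖y‖ ^ s)) • A) 1 volume :=
          eLpNorm_mono_ae hmono
      _ = ‖Real.exp K * (H * ‖y‖ ^ s)‖₊ • eLpNorm A 1 volume := eLpNorm_const_smul _ _ _ _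
      _ = ENNReal.ofReal (Real.exp K * (H * ‖y‖ ^ s)) * eLpNorm A 1 volume := by
          rw [ENNReal.smul_def, smul_eq_mul, ← Real.enorm_eq_ofReal (by positivity), enorm_eq_nnnorm]
  have hb5 : eLpNorm A 1 volume ≤ (volume E) ^ (1/2 : ℝ) * eLpNorm A 2 volume :=
    elpnorm_one_le_of_support hEm hAsm hA0
  -- assemble
  rw [hsplit]
  calc eLpNorm (fun x => f1 x + f2 x) 1 volume
      ≤ eLpNorm f1 1 volume + eLpNorm f2 1 volume := eLpNorm_add_le hf1m hf2m le_rfl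
    _ ≤ ENNReal.ofReal (Real.exp K) *
          ((volume E₁) ^ (1/2 : ℝ) * (besovSemi n s A * ENNReal.ofReal (‖y‖ ^ s))) +
        ENNReal.ofReal (Real.exp K * (H * ‖y‖ ^ s)) *
          ((volume E) ^ (1/2 : ℝ) * eLpNorm A 2 volume) := by
        gcongr
        · exact le_trans hb1 (mul_le_mul' le_rfl (le_trans hb2 (mul_le_mul' le_rfl hb3)))
        · exact le_trans hb4 (mul_le_mul' le_rfl hb5)
    _ = ENNReal.ofReal (Real.exp K) *
          ((volume E₁) ^ (1 / 2 : ℝ) * besovSemi n s A +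
            ENNReal.ofReal H * (volume E) ^ (1 / 2 : ℝ) * eLpNorm A 2 volume) *
          ENNReal.ofReal (‖y‖ ^ s) := by
        rw [ENNReal.ofReal_mul heK, ENNReal.ofReal_mul hH]
        ring
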